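/- Every n-dimensional evolution algebra over a field K whose annihilator has dimension n − 1 is isotopic to the evolution algebra E_1 with natural basis {e_1,…,e_n} and products e_1e_1 = e_1 and e_ie_j = 0 otherwise. -/

import Mathlib

open scoped BigOperators

noncomputable section

/-- The product in the `n`-dimensional evolution algebra over `K` (on the model space
`Fin n → K`, whose standard basis is the natural basis) with structure constants `t`,
so that `eᵢ * eᵢ = ∑ⱼ t i j • eⱼ` and `eᵢ * eⱼ = 0` for `i ≠ j`. -/
def evolMul {K : Type*} [Field K] {n : ℕ} (t : Fin n → Fin n → K)
    (x y : Fin n → K) : Fin n → K :=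
  fun k => ∑ i, x i * y i * t i k

lemma evolMul_add_left {K : Type*} [Field K] {n : ℕ} (t : Fin n → Fin n → K)
    (a b v : Fin n → K) : evolMul t (a + b) v = evolMul t a v + evolMul t b v := by
  funext k
  simp [evolMul, add_mul, Finset.sum_add_distrib]

lemma evolMul_add_right {K : Type*} [Field K] {n : ℕ} (t : Fin n → Fin n → K)
    (v a b : Fin n → K) : evolMul t v (a + b) = evolMul t v a + evolMul t v b := by
  funext k
  simp [evolMul, mul_add, add_mul, Finset.sum_add_distrib]

lemma evolMul_smul_left {K : Type*} [Field K] {n : ℕ} (t : Fin n → Fin n → K)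
    (c : K) (a v : Fin n → K) : evolMul t (c • a) v = c • evolMul t a v := by
  funext k
  simp [evolMul, Finset.mul_sum, mul_assoc]

lemma evolMul_smul_right {K : Type*} [Field K] {n : ℕ} (t : Fin n → Fin n → K)
    (c : K) (v a : Fin n → K) : evolMul t v (c • a) = c • evolMul t v a := by
  funext k
  simp [evolMul, Finset.mul_sum]
  ring_nf
  apply Finset.sum_congr rfl
  intro i _
  ring

/-- The annihilator of the evolution algebra with structure constants `t`. -/
def evolAnn {K : Type*} [Field K] {n : ℕ} (t : Fin n → Fin n → K) :
    Submodule K (Fin n → K) where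
  carrier := {u | ∀ v, evolMul t u v = 0 ∧ evolMul t v u = 0}
  zero_mem' := by
    intro v
    constructor <;> · funext k; simp [evolMul]
  add_mem' := by
    intro a b ha hb v
    exact ⟨by rw [evolMul_add_left, (ha v).1, (hb v).1, add_zero],
           by rw [evolMul_add_right, (ha v).2, (hb v).2, add_zero]⟩
  smul_mem' := by
    intro c a ha v
    exact ⟨by rw [evolMul_smul_left, (ha v).1, smul_zero],
           by rw [evolMul_smul_right, (ha v).2, smul_zero]⟩

/-- The derived algebra (span of all products). -/
def evolDerived {K : Type*} [Field K] {n : ℕ} (t : Fin n → Fin n → K) :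
    Submodule K (Fin n → K) :=
  Submodule.span K {w | ∃ u v, evolMul t u v = w}

/-- Two evolution algebras (given by structure constants) are isomorphic. -/
def EvolIsom {K : Type*} [Field K] {n : ℕ} (t t' : Fin n → Fin n → K) : Prop :=
  ∃ f : (Fin n → K) ≃ₗ[K] (Fin n → K),
    ∀ u v, evolMul t' (f u) (f v) = f (evolMul t u v)

/-- Two evolution algebras (given by structure constants) are isotopic. -/
def EvolIsotopic {K : Type*} [Field K] {n : ℕ} (t t' : Fin n → Fin n → K) : Prop :=
  ∃ f g h : (Fin n → K) ≃ₗ[K] (Fin n → K),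
    ∀ u v, evolMul t' (f u) (g v) = h (evolMul t u v)

/-- Two evolution algebras (given by structure constants) are strongly isotopic. -/
def EvolStrongIsotopic {K : Type*} [Field K] {n : ℕ} (t t' : Fin n → Fin n → K) : Prop :=
  ∃ f h : (Fin n → K) ≃ₗ[K] (Fin n → K),
    ∀ u v, evolMul t' (f u) (f v) = h (evolMul t u v)


section IsotopyAux

variable {K : Type*} [Field K] {n : ℕ}

/-- A shear-type automorphism sending `Pi.single j 1` to `w`, given `w j ≠ 0`. -/
def evolShear (j : Fin n) (w : Fin n → K) (hw : w j ≠ 0) :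
    (Fin n → K) ≃ₗ[K] (Fin n → K) where
  toFun x := x + x j • (w - Pi.single j 1)
  invFun y := y - (y j / w j) • (w - Pi.single j 1)
  map_add' a b := by simp only [Pi.add_apply, add_smul]; abel
  map_smul' c a := by
    simp only [Pi.smul_apply, smul_eq_mul, mul_smul, smul_add, RingHom.id_apply]
  left_inv x := by
    have hd : ((x + x j • (w - Pi.single j 1) : Fin n → K)) j = x j * w j := by
      simp [Pi.single_apply]; ring
    simp only [hd, mul_div_assoc, div_self hw, mul_one]
    abel
  right_inv y := by
    have hd : ((y - (y j / w j) • (w - Pi.single j 1) : Fin n → K)) j = y j / w j := by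
      simp only [Pi.sub_apply, Pi.smul_apply, Pi.single_apply, if_pos rfl, Pi.one_apply,
        smul_eq_mul]
      field_simp
      simp
    simp only [hd]
    abel

lemma evolShear_single (j : Fin n) (w : Fin n → K) (hw : w j ≠ 0) :
    evolShear j w hw (Pi.single j 1) = w := by
  simp [evolShear]

lemma mem_evolAnn_iff (t : Fin n → Fin n → K) (u : Fin n → K) :
    u ∈ evolAnn t ↔ ∀ j, t j ≠ 0 → u j = 0 := by
  constructor
  · intro h j hj
    obtain ⟨k, hk⟩ : ∃ k, t j k ≠ 0 := by
      by_contra hc; push_neg at hc; exact hj (funext hc)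
    have h1 := congrFun (h (Pi.single j 1)).1 k
    simp only [evolMul, Pi.zero_apply] at h1
    rw [Finset.sum_eq_single j] at h1
    · simp only [Pi.single_eq_same, mul_one] at h1
      rcases mul_eq_zero.mp h1 with h1 | h1
      exacts [h1, absurd h1 hk]
    · intro i _ hi; simp [Pi.single_apply, hi]
    · simp
  · intro h v
    have key : ∀ a b : Fin n → K, (∀ j, t j ≠ 0 → a j = 0 ∨ b j = 0) →
        evolMul t a b = 0 := by
      intro a b hab
      funext k
      simp only [evolMul, Pi.zero_apply]
      apply Finset.sum_eq_zero
      intro i _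
      by_cases hi : t i = 0
      · simp [hi]
      · rcases hab i hi with h' | h' <;> simp [h']
    exact ⟨key u v fun j hj => Or.inl (h j hj), key v u fun j hj => Or.inr (h j hj)⟩

lemma exists_unique_row (hn : 1 ≤ n) (t : Fin n → Fin n → K)
    (hann : Module.finrank K (evolAnn t) = n - 1) :
    ∃ i₀ : Fin n, t i₀ ≠ 0 ∧ ∀ j, j ≠ i₀ → t j = 0 := by
  classical
  let π : (Fin n → K) →ₗ[K] ({j : Fin n // t j ≠ 0} → K) :=
    LinearMap.funLeft K K Subtype.val
  have hker : LinearMap.ker π = evolAnn t := by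
    ext u
    simp only [LinearMap.mem_ker, mem_evolAnn_iff, π, LinearMap.funLeft_apply, funext_iff]
    constructor
    · intro h j hj; exact h ⟨j, hj⟩
    · intro h j; exact h j.1 j.2
  have hsurj : Function.Surjective π :=
    LinearMap.funLeft_surjective_of_injective K K _ Subtype.val_injective
  have hrn := LinearMap.finrank_range_add_finrank_ker π
  rw [LinearMap.range_eq_top.mpr hsurj, hker, hann, finrank_top] at hrn
  have hcard : Fintype.card {j : Fin n // t j ≠ 0} = 1 := by
    have h1 : Module.finrank K ({j : Fin n // t j ≠ 0} → K) =
        Fintype.card {j : Fin n // t j ≠ 0} := Module.finrank_pi K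
    have h2 : Module.finrank K (Fin n → K) = n := by simp [Module.finrank_pi]
    rw [h1, h2] at hrn
    have hle : Fintype.card {j : Fin n // t j ≠ 0} ≤ n := by
      simpa using Fintype.card_subtype_le _
    omega
  obtain ⟨⟨i₀, hi₀⟩, ha⟩ := Fintype.card_eq_one_iff.mp hcard
  refine ⟨i₀, hi₀, fun j hj => ?_⟩
  by_contra hc
  exact hj (congrArg Subtype.val (ha ⟨j, hc⟩))

end IsotopyAux

/-
STATEMENT 7: Every n-dimensional evolution algebra over K whose annihilator has
dimension n − 1 is isotopic to E₁ (e₁e₁ = e₁, all other natural-basis products zero).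
-/
theorem isotopic_E1_of_annihilator_codim_one
    {K : Type*} [Field K] {n : ℕ} (hn : 1 ≤ n) (t : Fin n → Fin n → K)
    (hann : Module.finrank K (evolAnn t) = n - 1) :
    EvolIsotopic t (fun i j : Fin n => if (i : ℕ) = 0 ∧ (j : ℕ) = 0 then (1 : K) else 0) := by
  classical
  haveI : NeZero n := ⟨by omega⟩
  obtain ⟨i₀, hi₀, hrow⟩ := exists_unique_row hn t hann
  set w : Fin n → K := t i₀ with hwdef
  obtain ⟨j₀, hj₀⟩ : ∃ j, w j ≠ 0 := by
    by_contra hc; push_neg at hc; exact hi₀ (funext hc)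
  have hval : ∀ i : Fin n, (i : ℕ) = 0 ↔ i = 0 := fun i => by
    rw [Fin.ext_iff, Fin.val_zero]
  let f : (Fin n → K) ≃ₗ[K] (Fin n → K) :=
    LinearEquiv.funCongrLeft K K (Equiv.swap (0 : Fin n) i₀)
  let H : (Fin n → K) ≃ₗ[K] (Fin n → K) :=
    (LinearEquiv.funCongrLeft K K (Equiv.swap (0 : Fin n) j₀)).trans (evolShear j₀ w hj₀)
  have hswap : ∀ (a b : Fin n), (LinearEquiv.funCongrLeft K K (Equiv.swap a b))
      (Pi.single a (1 : K)) = Pi.single b 1 := by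
    intro a b
    funext i
    simp only [LinearEquiv.funCongrLeft_apply, LinearMap.funLeft_apply, Pi.single_apply]
    by_cases hib : i = b
    · subst hib; simp
    · have : Equiv.swap a b i ≠ a := by
        intro hc
        apply hib
        have := (Equiv.swap a b).injective (α := Fin n)
        have h2 : Equiv.swap a b b = a := Equiv.swap_apply_right a b
        exact (Equiv.swap a b).injective (hc.trans h2.symm)
      simp [this, hib]
  have hH : H (Pi.single (0 : Fin n) 1) = w := by
    show evolShear j₀ w hj₀ ((LinearEquiv.funCongrLeft K K (Equiv.swap (0 : Fin n) j₀))
      (Pi.single (0 : Fin n) 1)) = w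
    rw [hswap, evolShear_single]
  refine ⟨f, f, H.symm, fun u v => ?_⟩
  have hf0 : ∀ x : Fin n → K, f x 0 = x i₀ := by
    intro x
    simp only [f, LinearEquiv.funCongrLeft_apply, LinearMap.funLeft_apply,
      Equiv.swap_apply_left]
  have hmul : evolMul t u v = (u i₀ * v i₀) • w := by
    funext k
    simp only [evolMul, Pi.smul_apply, smul_eq_mul]
    rw [Finset.sum_eq_single i₀]
    · intro i _ hi; rw [hrow i hi]; simp
    · simp
  have hmul' : evolMul (fun i j : Fin n => if (i : ℕ) = 0 ∧ (j : ℕ) = 0 then (1 : K) else 0)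
      (f u) (f v) = (u i₀ * v i₀) • (Pi.single (0 : Fin n) (1 : K) : Fin n → K) := by
    funext k
    simp only [evolMul, Pi.smul_apply, smul_eq_mul]
    rw [Finset.sum_eq_single (0 : Fin n)]
    · rw [hf0 u, hf0 v, Pi.single_apply]
      by_cases hk : k = 0
      · simp [hk]
      · have : ¬((k : ℕ) = 0) := fun h => hk ((hval k).mp h)
        simp [hk, this, eq_comm]
    · intro i _ hi
      have : ¬((i : ℕ) = 0 ∧ (k : ℕ) = 0) := fun h => hi ((hval i).mp h.1)
      simp [this, hi]
    · simp
  rw [hmul', hmul, map_smul]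
  congr 1
  exact ((LinearEquiv.symm_apply_eq H).mpr hH.symm).symm
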